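/- Code shortening preserves the MSR property: if there exists an [n' = n+1, k' = k+1, d' = d+1] linear systematic exact-repair MSR code with β = 1 (so α' = d'-k'+1 and B' = k'α'), then there exists an [n, k, d] linear systematic exact-repair MSR code with β = 1, α = d-k+1 = α', and B = kα = B' - α'. The shortened code is obtained by setting the α message symbols of one designated systematic node to zero. -/
import Mathlib
set_option maxHeartbeats 1000000


/-- A linear systematic exact-repair MSR code with parameters `[n, k, d]` and `β = 1`:
per-node storage `α = d - k + 1`, file size `B = k * α`, the first `k` nodes systematic,
MDS reconstruction from any `k` nodes, and exact repair of any systematic node from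
any `d` of the remaining nodes, one symbol from each. -/
structure SysExactMSR (F : Type*) [Field F] (n k d : ℕ) where
  hkd : k ≤ d
  hdn : d < n
  G : Fin n → Matrix (Fin k × Fin (d - k + 1)) (Fin (d - k + 1)) F
  systematic : ∀ ℓ : Fin k, ∀ i a j,
    G (Fin.castLE (by omega) ℓ) (i, a) j = if i = ℓ ∧ a = j then 1 else 0
  mds : ∀ s : Fin k → Fin n, Function.Injective s →
    IsUnit (Matrix.of (fun i (j : Fin k × Fin (d - k + 1)) => G (s j.1) i j.2) :
      Matrix (Fin k × Fin (d - k + 1)) (Fin k × Fin (d - k + 1)) F)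
  repair : ∀ ℓ : Fin k, ∀ h : Fin d → Fin n, Function.Injective h →
    (∀ i, h i ≠ Fin.castLE (by omega) ℓ) →
    ∃ (μ : Fin d → Fin (d - k + 1) → F) (ν : Fin (d - k + 1) → Fin d → F),
      ∀ j : Fin (d - k + 1),
        (fun r => G (Fin.castLE (by omega) ℓ) r j) =
          ∑ i : Fin d, ν j i • (G (h i)).mulVec (μ i)

/-- Code shortening: an `[n+1, k+1, d+1]` linear systematic exact-repair MSR code
yields an `[n, k, d]` one (with the same `α = d - k + 1`). -/
theorem code_shortening {F : Type*} [Field F] [Fintype F] (n k d : ℕ)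
    (h : Nonempty (SysExactMSR F (n + 1) (k + 1) (d + 1))) :
    Nonempty (SysExactMSR F n k d) := by
  obtain ⟨C⟩ := h
  have hkd : k ≤ d := by have := C.hkd; omega
  have hdn : d < n := by have := C.hdn; omega
  set p : Fin (n + 1) := ⟨k, by omega⟩ with hp
  set emb : Fin n → Fin (n + 1) := p.succAbove with hemb
  have emb_inj : Function.Injective emb := Fin.succAbove_right_injective
  have emb_ne : ∀ m, emb m ≠ p := fun m => Fin.succAbove_ne p m
  have emb_val_lt : ∀ m : Fin n, m.val < k → emb m = ⟨m.val, by omega⟩ := by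
    intro m hm
    have hlt : Fin.castSucc m < p := by
      simp only [Fin.lt_def, Fin.coe_castSucc, hp]; exact hm
    rw [hemb, Fin.succAbove_of_castSucc_lt _ _ hlt]
    rfl
  have emb_castLE : ∀ ℓ : Fin k,
      emb (Fin.castLE (by omega) ℓ) = Fin.castLE (by omega) (Fin.castSucc ℓ) := by
    intro ℓ
    rw [emb_val_lt _ (by simpa using ℓ.isLt)]
    rfl
  set ec : Fin (d + 1 - (k + 1) + 1) ≃ Fin (d - k + 1) :=
    finCongr (by omega) with hec
  have p_eq : p = Fin.castLE (by omega) (Fin.last k) := rfl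
  refine ⟨⟨hkd, hdn,
    fun m => Matrix.of fun r j => C.G (emb m) (r.1.castSucc, ec.symm r.2) (ec.symm j),
    ?_, ?_, ?_⟩⟩
  · -- systematic
    intro ℓ i a j
    simp only [Matrix.of_apply]
    rw [emb_castLE ℓ, C.systematic (Fin.castSucc ℓ) (Fin.castSucc i) (ec.symm a) (ec.symm j)]
    simp [Fin.castSucc_inj]
  · -- mds
    intro s hs
    set s' : Fin (k + 1) → Fin (n + 1) := Fin.lastCases p (fun j => emb (s j)) with hs'
    have hs'inj : Function.Injective s' := by
      intro a b hab
      induction a using Fin.lastCases with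
      | last =>
        induction b using Fin.lastCases with
        | last => rfl
        | cast b => rw [hs'] at hab; simp only [Fin.lastCases_last, Fin.lastCases_castSucc] at hab
                    exact absurd hab.symm (emb_ne _)
      | cast a =>
        induction b using Fin.lastCases with
        | last => rw [hs'] at hab; simp only [Fin.lastCases_last, Fin.lastCases_castSucc] at hab
                  exact absurd hab (emb_ne _)
        | cast b => rw [hs'] at hab
                    simp only [Fin.lastCases_castSucc] at hab
                    rw [hs (emb_inj hab)]
    have hM' := C.mds s' hs'inj
    rw [Matrix.isUnit_iff_isUnit_det] at hM' ⊢
    set Mnew : Matrix (Fin k × Fin (d - k + 1)) (Fin k × Fin (d - k + 1)) F :=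
      Matrix.of (fun i j => (Matrix.of fun r j' =>
        C.G (emb (s j.1)) (r.1.castSucc, ec.symm r.2) (ec.symm j')) i j.2) with hMnew
    set M' : Matrix (Fin (k + 1) × Fin (d + 1 - (k + 1) + 1)) (Fin (k + 1) × Fin (d + 1 - (k + 1) + 1)) F :=
      Matrix.of (fun i j => C.G (s' j.1) i j.2) with hM'def
    set e : ((Fin k × Fin (d + 1 - (k + 1) + 1)) ⊕ Fin (d + 1 - (k + 1) + 1)) ≃ (Fin (k + 1) × Fin (d + 1 - (k + 1) + 1)) :=
      { toFun := Sum.elim (fun r => (r.1.castSucc, r.2)) (fun a => (Fin.last k, a))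
        invFun := fun r => Fin.lastCases (Sum.inr r.2) (fun i => Sum.inl (i, r.2)) r.1
        left_inv := by rintro (⟨i, a⟩ | a) <;> simp
        right_inv := by
          rintro ⟨i, a⟩
          induction i using Fin.lastCases <;> simp } with he
    set eqv : (Fin k × Fin (d + 1 - (k + 1) + 1)) ≃ (Fin k × Fin (d - k + 1)) :=
      (Equiv.refl (Fin k)).prodCongr ec with heqv
    set Cb : Matrix (Fin (d + 1 - (k + 1) + 1)) (Fin k × Fin (d + 1 - (k + 1) + 1)) F :=
      Matrix.of (fun a jb => C.G (s' (Fin.castSucc jb.1)) (Fin.last k, a) jb.2) with hCb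
    have key : M'.submatrix e e =
        Matrix.fromBlocks (Mnew.submatrix eqv eqv) 0 Cb 1 := by
      ext i j
      rcases i with (⟨i, a⟩ | a) <;> rcases j with (⟨j, b⟩ | b)
      · simp [he, hM'def, hMnew, heqv, hs']
      · -- zero block
        simp only [he, hM'def, Matrix.submatrix_apply, Equiv.coe_fn_mk, Sum.elim_inl,
          Sum.elim_inr, Matrix.of_apply, Matrix.fromBlocks_apply₁₂, Matrix.zero_apply, hs',
          Fin.lastCases_last]
        rw [p_eq, C.systematic (Fin.last k) (Fin.castSucc i) a b]
        simp [Fin.ne_of_lt (Fin.castSucc_lt_last i)]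
      · simp [he, hCb, hM'def]
      · simp only [he, hM'def, Matrix.submatrix_apply, Equiv.coe_fn_mk, Sum.elim_inr,
          Matrix.of_apply, Matrix.fromBlocks_apply₂₂, hs', Fin.lastCases_last]
        rw [p_eq, C.systematic (Fin.last k) (Fin.last k) a b]
        simp [Matrix.one_apply]
    have hdet : M'.det = Mnew.det := by
      rw [← Matrix.det_submatrix_equiv_self e M', key, Matrix.det_fromBlocks_zero₁₂,
        Matrix.det_one, mul_one, Matrix.det_submatrix_equiv_self eqv Mnew]
    have : IsUnit Mnew.det := hdet ▸ hM'
    exact this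
  · -- repair
    intro ℓ h0 hinj havoid
    set h' : Fin (d + 1) → Fin (n + 1) := Fin.lastCases p (fun i => emb (h0 i)) with hh'
    have h'inj : Function.Injective h' := by
      intro a b hab
      induction a using Fin.lastCases with
      | last =>
        induction b using Fin.lastCases with
        | last => rfl
        | cast b => rw [hh'] at hab; simp only [Fin.lastCases_last, Fin.lastCases_castSucc] at hab
                    exact absurd hab.symm (emb_ne _)
      | cast a =>
        induction b using Fin.lastCases with
        | last => rw [hh'] at hab; simp only [Fin.lastCases_last, Fin.lastCases_castSucc] at hab
                  exact absurd hab (emb_ne _)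
        | cast b => rw [hh'] at hab
                    simp only [Fin.lastCases_castSucc] at hab
                    rw [hinj (emb_inj hab)]
    have h'avoid : ∀ i, h' i ≠ Fin.castLE (by omega) (Fin.castSucc ℓ) := by
      intro i
      induction i using Fin.lastCases with
      | last =>
        rw [hh']
        simp only [Fin.lastCases_last]
        intro hcontra
        have : (p : Fin (n+1)).val = ℓ.val := congrArg Fin.val hcontra
        have hℓ := ℓ.isLt
        simp [hp] at this
        omega
      | cast i =>
        rw [hh']
        simp only [Fin.lastCases_castSucc]
        rw [← emb_castLE ℓ]
        exact fun hc => havoid i (emb_inj hc)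
    obtain ⟨μ', ν', hrep⟩ := C.repair (Fin.castSucc ℓ) h' h'inj h'avoid
    refine ⟨fun i a => μ' i.castSucc (ec.symm a), fun j i => ν' (ec.symm j) i.castSucc, ?_⟩
    intro j
    funext r
    obtain ⟨i0, a⟩ := r
    have H := congrFun (hrep (ec.symm j)) (i0.castSucc, ec.symm a)
    simp only [Finset.sum_apply, Pi.smul_apply, smul_eq_mul] at H
    rw [Fin.sum_univ_castSucc] at H
    have hlast : ν' (ec.symm j) (Fin.last d) *
        (C.G (h' (Fin.last d))).mulVec (μ' (Fin.last d)) (i0.castSucc, ec.symm a) = 0 := by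
      rw [hh']
      simp only [Fin.lastCases_last]
      have : (C.G p).mulVec (μ' (Fin.last d)) (i0.castSucc, ec.symm a) = 0 := by
        rw [Matrix.mulVec]
        simp only [dotProduct]
        apply Finset.sum_eq_zero
        intro b _
        rw [p_eq, C.systematic (Fin.last k) (Fin.castSucc i0) (ec.symm a) b]
        simp [Fin.ne_of_lt (Fin.castSucc_lt_last i0)]
      rw [this, mul_zero]
    rw [hlast, add_zero] at H
    simp only [Matrix.of_apply, Finset.sum_apply, Pi.smul_apply, smul_eq_mul]
    rw [emb_castLE ℓ]
    rw [H]
    apply Finset.sum_congr rfl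
    intro i _
    rw [hh']
    simp only [Fin.lastCases_castSucc]
    congr 1
    rw [Matrix.mulVec, Matrix.mulVec]
    simp only [dotProduct, Matrix.of_apply]
    exact (Equiv.sum_comp ec.symm
      (fun b => C.G (emb (h0 i)) (i0.castSucc, ec.symm a) b * μ' i.castSucc b)).symm
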